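/- Log-concavity for monotone walks (Corollary 4.2, weighted counting form): fix A = (0,a) ∈ Γ, B = (m,b) ∈ Γ, and 0 < ℓ < m. Let π, ω : ℤ → ℝ be nonnegative (y-invariant weights for right-steps and up-steps). A monotone lattice path from A to B is a function w : {0,…,u} → ℤ², u = m + b − a, with w(0) = A, w(u) = B, and w(t+1) − w(t) ∈ {(1,0),(0,1)} for all t < u; it lies in Γ if all its points do. The weight of such a path is the product over its steps of π(i) for each step (1,0) taken from a point with x-coordinate i, and ω(i) for each step (0,1) taken from a point with x-coordinate i. For k ∈ ℤ let q(k) be the sum of the weights of all monotone lattice paths from A to B lying in Γ whose first point with x-coordinate ℓ is (ℓ,k). Then q(k)² ≥ q(k+1)·q(k−1) for every k ∈ ℤ with lo(ℓ) ≤ k−1 and k+1 ≤ hi(ℓ). -/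

import Mathlib

/-- Monotone steps: right and up. -/
def monoSteps : Set (ℤ × ℤ) := {(1, 0), (0, 1)}

/-- The lattice region `Γ = {(i,j) : 0 ≤ i ≤ m, lo i ≤ j ≤ hi i}`. -/
def Region (m : ℤ) (lo hi : ℤ → ℤ) : Set (ℤ × ℤ) :=
  {p | 0 ≤ p.1 ∧ p.1 ≤ m ∧ lo p.1 ≤ p.2 ∧ p.2 ≤ hi p.1}

/-- A lattice path of arbitrary finite length. -/
def LatticePath := Σ n : ℕ, Fin (n + 1) → ℤ × ℤ

/-- The weight of a single monotone step from `p` to `q`: `π i` for a right-step and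
`ω i` for an up-step taken from a point with `x`-coordinate `i`. -/
noncomputable def monoStepWeight (π ω : ℤ → ℝ) (p q : ℤ × ℤ) : ℝ :=
  if q - p = (1, 0) then π p.1
  else if q - p = (0, 1) then ω p.1
  else 0

/-- `monoExit π ω Γ a m b ℓ k` is `q(k)`: the total weight of monotone lattice paths
from `(0,a)` to `(m,b)` of length `m + b - a` lying in `Γ` whose first point with
`x`-coordinate `ℓ` is `(ℓ,k)`. -/
noncomputable def monoExit (π ω : ℤ → ℝ) (Γ : Set (ℤ × ℤ)) (a m b ℓ k : ℤ) : ℝ :=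
  ∑' ξ : {ξ : LatticePath //
      (ξ.1 : ℤ) = m + b - a ∧
      ξ.2 0 = (0, a) ∧ ξ.2 (Fin.last ξ.1) = (m, b) ∧
      (∀ t : Fin ξ.1, ξ.2 t.succ - ξ.2 t.castSucc ∈ monoSteps) ∧
      (∀ t, ξ.2 t ∈ Γ) ∧
      (∃ t, ξ.2 t = (ℓ, k) ∧ ∀ s < t, (ξ.2 s).1 ≠ ℓ)},
    ∏ t : Fin ξ.1.1, monoStepWeight π ω (ξ.1.2 t.castSucc) (ξ.1.2 t.succ)

namespace MonoAux
open Finset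

variable {a b m : ℤ}

/-- Extension of a finite sequence `t : Fin m.toNat → ℤ` to `ℤ`, with value `a`
for negative arguments and `b` for arguments `≥ m`. -/
def exts (a b m : ℤ) (t : Fin m.toNat → ℤ) (x : ℤ) : ℤ :=
  if h : 0 ≤ x ∧ x < m then t ⟨x.toNat, by omega⟩ else if x < 0 then a else b

lemma exts_neg (t : Fin m.toNat → ℤ) {x : ℤ} (hx : x < 0) : exts a b m t x = a := by
  have h1 : ¬ (0 ≤ x ∧ x < m) := by omega
  simp [exts, h1, hx]

lemma exts_top (hm : 1 ≤ m) (t : Fin m.toNat → ℤ) {x : ℤ} (hx : m ≤ x) :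
    exts a b m t x = b := by
  have h1 : ¬ (0 ≤ x ∧ x < m) := by omega
  have h2 : ¬ x < 0 := by omega
  simp [exts, h1, h2]

lemma exts_mid (t : Fin m.toNat → ℤ) {x : ℤ} (h0 : 0 ≤ x) (hx : x < m) :
    exts a b m t x = t ⟨x.toNat, by omega⟩ := by
  simp [exts, h0, hx]

lemma exts_fin (t : Fin m.toNat → ℤ) (c : Fin m.toNat) :
    exts a b m t (c : ℤ) = t c := by
  have h0 : (0:ℤ) ≤ (c:ℤ) := by positivity
  have hx : (c:ℤ) < m := by
    have := c.isLt
    omega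
  rw [exts_mid t h0 hx]
  congr 1

section Walk

variable (a : ℤ) (tE : ℤ → ℤ)

/-- The canonical staircase walk determined by the threshold function `tE`. -/
def walk : ℕ → ℤ × ℤ
  | 0 => (0, a)
  | j+1 =>
    let p := walk j
    if tE p.1 ≤ p.2 then (p.1 + 1, p.2) else (p.1, p.2 + 1)

variable {m b : ℤ} {u : ℕ}

lemma walk_inv (hmono : Monotone tE) (hneg : tE (-1) = a) (htop : tE m = b)
    (hm : 1 ≤ m) (hu : (u:ℤ) = m + b - a) :
    ∀ j : ℕ, j ≤ u →
      0 ≤ (walk a tE j).1 ∧ (walk a tE j).1 ≤ m ∧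
      (walk a tE j).1 + (walk a tE j).2 = (j:ℤ) + a ∧
      tE ((walk a tE j).1 - 1) ≤ (walk a tE j).2 ∧
      (walk a tE j).2 ≤ tE (walk a tE j).1 := by
  intro j
  induction j with
  | zero =>
    intro _
    have h1 : tE (-1) ≤ tE 0 := hmono (by omega)
    simp only [walk]
    refine ⟨le_refl _, by omega, by push_cast; ring, by simp [hneg], by omega⟩
  | succ j ih =>
    intro hj
    obtain ⟨i1, i2, i3, i4, i5⟩ := ih (by omega)
    set p := walk a tE j with hp
    by_cases h : tE p.1 ≤ p.2
    · have hne : p.1 ≠ m := by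
        intro he
        rw [he, htop] at h
        have : (j:ℤ) = m + b - a := by omega
        omega
      have hstep : walk a tE (j+1) = (p.1 + 1, p.2) := by
        rw [walk, ← hp]
        simp [h]
      rw [hstep]
      have h6 : tE p.1 ≤ tE (p.1 + 1) := hmono (by omega)
      dsimp only
      refine ⟨by omega, by omega, by push_cast; omega, by simpa using h, by omega⟩
    · have hstep : walk a tE (j+1) = (p.1, p.2 + 1) := by
        rw [walk, ← hp]
        simp [h]
      rw [hstep]
      dsimp only
      refine ⟨by omega, by omega, by push_cast; omega, by omega, by omega⟩

lemma walk_col (hmono : Monotone tE) (hneg : tE (-1) = a) (htop : tE m = b)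
    (hm : 1 ≤ m) (hu : (u:ℤ) = m + b - a) {j : ℕ} (hj : j ≤ u)
    {c : ℤ} (h0 : 0 ≤ c) (hcm : c ≤ m)
    (h1 : c + tE (c-1) ≤ (j:ℤ) + a) (h2 : (j:ℤ) + a ≤ c + tE c) :
    walk a tE j = (c, (j:ℤ) + a - c) := by
  obtain ⟨i1, i2, i3, i4, i5⟩ := walk_inv a tE hmono hneg htop hm hu j hj
  set p := walk a tE j with hp
  have hc : p.1 = c := by
    rcases lt_trichotomy p.1 c with h | h | h
    · exfalso
      have e1 : tE p.1 ≤ tE (c-1) := hmono (by omega)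
      omega
    · exact h
    · exfalso
      have e2 : tE c ≤ tE (p.1 - 1) := hmono (by omega)
      omega
  have : p = (p.1, p.2) := rfl
  rw [this, hc]
  congr 1
  omega

lemma walk_mem_steps (j : ℕ) : walk a tE (j+1) - walk a tE j ∈ monoSteps := by
  rw [walk]
  set p := walk a tE j
  by_cases h : tE p.1 ≤ p.2
  · simp only [h, if_true]
    left
    simp [Prod.ext_iff]
  · simp only [h, if_false]
    right
    simp [Prod.ext_iff]

end Walk

section MSW

variable (π ω : ℤ → ℝ)

lemma msw_right (x y : ℤ) : monoStepWeight π ω (x, y) (x+1, y) = π x := by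
  have h : ((x+1 : ℤ), y) - (x, y) = ((1:ℤ), (0:ℤ)) := by
    simp [Prod.ext_iff]
  simp [monoStepWeight, h]

lemma msw_up (x y : ℤ) : monoStepWeight π ω (x, y) (x, y+1) = ω x := by
  have h : ((x : ℤ), y+1) - (x, y) = ((0:ℤ), (1:ℤ)) := by
    simp [Prod.ext_iff]
  have h2 : ((0:ℤ), (1:ℤ)) ≠ ((1:ℤ), (0:ℤ)) := by
    simp [Prod.ext_iff]
  simp [monoStepWeight, h, h2]

end MSW

section WalkProd

variable (π ω : ℤ → ℝ) (a : ℤ) (tE : ℤ → ℤ) {m b : ℤ} {u : ℕ}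

lemma walk_prod (hmono : Monotone tE) (hneg : tE (-1) = a) (htop : tE m = b)
    (hm : 1 ≤ m) (hu : (u:ℤ) = m + b - a) :
    ∀ d : ℕ, ∀ c : ℤ, 0 ≤ c → c ≤ m → m - c = (d:ℤ) →
    ∏ j ∈ Finset.Ico ((c + tE (c-1) - a).toNat) u,
        monoStepWeight π ω (walk a tE j) (walk a tE (j+1)) =
      (∏ x ∈ Finset.Ico c m, π x) *
        ∏ x ∈ Finset.Icc c m, ω x ^ (tE x - tE (x-1)).toNat := by
  intro d
  induction d with
  | zero =>
    intro c hc0 hcm hd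
    have hcm' : c = m := by omega
    subst hcm'
    have ha1 : tE (-1) ≤ tE (c-1) := hmono (by omega)
    have ha2 : tE (c-1) ≤ tE c := hmono (by omega)
    set A := (c + tE (c-1) - a).toNat with hA
    have hA1 : (A:ℤ) = c + tE (c-1) - a := by
      rw [hA]; rw [Int.toNat_of_nonneg (by omega)]
    have hAu : A ≤ u := by omega
    have hprod : ∀ j ∈ Finset.Ico A u,
        monoStepWeight π ω (walk a tE j) (walk a tE (j+1)) = ω c := by
      intro j hj
      rw [Finset.mem_Ico] at hj
      have hju : (j:ℤ) < (u:ℤ) := by exact_mod_cast hj.2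
      have hjA : (A:ℤ) ≤ (j:ℤ) := by exact_mod_cast hj.1
      have e1 : walk a tE j = (c, (j:ℤ) + a - c) :=
        walk_col a tE hmono hneg htop hm hu (by omega) hc0 (le_refl _)
          (by omega) (by rw [htop]; omega)
      have e2 : walk a tE (j+1) = (c, ((j+1:ℕ):ℤ) + a - c) :=
        walk_col a tE hmono hneg htop hm hu (u := u)
          (j := j+1) (by omega) hc0 (le_refl _) (c := c) (by push_cast; omega)
          (by rw [htop]; push_cast; omega)
      rw [e1, e2]
      have hst : ((j+1:ℕ):ℤ) + a - c = ((j:ℤ) + a - c) + 1 := by push_cast; ring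
      rw [hst, msw_up]
    rw [Finset.prod_congr rfl hprod, Finset.prod_const]
    have hexp : u - A = (tE c - tE (c-1)).toNat := by omega
    rw [Nat.card_Ico, hexp]
    have h1 : Finset.Ico c c = ∅ := by simp
    have h2 : Finset.Icc c c = {c} := by simp
    rw [h1, h2, Finset.prod_empty, Finset.prod_singleton, one_mul]
  | succ d ih =>
    intro c hc0 hcm hd
    have hclt : c < m := by omega
    have ha0 : tE (-1) ≤ tE (c-1) := hmono (by omega)
    have ha1 : tE (c-1) ≤ tE c := hmono (by omega)
    have ha2 : tE c ≤ tE m := hmono (by omega)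
    set A := (c + tE (c-1) - a).toNat with hA
    set B := (c + 1 + tE c - a).toNat with hB
    have hA1 : (A:ℤ) = c + tE (c-1) - a := by
      rw [hA]; rw [Int.toNat_of_nonneg (by omega)]
    have hB1 : (B:ℤ) = c + 1 + tE c - a := by
      rw [hB]; rw [Int.toNat_of_nonneg (by omega)]
    have hAB : A < B := by omega
    have hBu : B ≤ u := by omega
    rw [← Finset.prod_Ico_consecutive _ (le_of_lt hAB) hBu]
    -- second chunk via ih
    have hih := ih (c+1) (by omega) (by omega) (by push_cast; omega)
    have hBeq : ((c + 1 + tE (c + 1 - 1) - a).toNat) = B := by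
      rw [hB]
      congr 2
      ring_nf
    rw [hBeq] at hih
    rw [hih]
    -- first chunk
    have hBsplit : B = (B - 1) + 1 := by omega
    have hABm : A ≤ B - 1 := by omega
    have hfirst : ∏ j ∈ Finset.Ico A B,
        monoStepWeight π ω (walk a tE j) (walk a tE (j+1)) =
        ω c ^ (tE c - tE (c-1)).toNat * π c := by
      rw [hBsplit, Finset.prod_Ico_succ_top hABm]
      have hup : ∀ j ∈ Finset.Ico A (B-1),
          monoStepWeight π ω (walk a tE j) (walk a tE (j+1)) = ω c := by
        intro j hj
        rw [Finset.mem_Ico] at hj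
        have hjb : (j:ℤ) < (B:ℤ) - 1 := by
          have : (j:ℤ) < ((B-1 : ℕ):ℤ) := by exact_mod_cast hj.2
          omega
        have hja : (A:ℤ) ≤ (j:ℤ) := by exact_mod_cast hj.1
        have e1 : walk a tE j = (c, (j:ℤ) + a - c) :=
          walk_col a tE hmono hneg htop hm hu (by omega) hc0 (by omega)
            (by omega) (by omega)
        have e2 : walk a tE (j+1) = (c, ((j+1:ℕ):ℤ) + a - c) :=
          walk_col a tE hmono hneg htop hm hu (u := u)
            (j := j+1) (by omega) hc0 (le_of_lt hclt) (c := c) (by push_cast; omega)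
            (by push_cast; omega)
        rw [e1, e2]
        have hst : ((j+1:ℕ):ℤ) + a - c = ((j:ℤ) + a - c) + 1 := by push_cast; ring
        rw [hst, msw_up]
      rw [Finset.prod_congr rfl hup, Finset.prod_const]
      have hcard : (B - 1) - A = (tE c - tE (c-1)).toNat := by omega
      rw [Nat.card_Ico, hcard]
      congr 1
      -- msw at B-1 is π c
      have hb1 : ((B-1 : ℕ):ℤ) = (B:ℤ) - 1 := by omega
      have e1 : walk a tE (B-1) = (c, ((B-1:ℕ):ℤ) + a - c) :=
        walk_col a tE hmono hneg htop hm hu (u := u) (j := B-1)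
          (by omega) hc0 (by omega) (c := c) (by omega) (by omega)
      have e2 : walk a tE ((B-1)+1) = (c + 1, ((B-1+1:ℕ):ℤ) + a - (c+1)) := by
        have hmon2 : tE c ≤ tE (c+1) := hmono (by omega)
        exact walk_col a tE hmono hneg htop hm hu (u := u) (j := B-1+1)
          (by omega) (c := c+1) (by omega) (by omega) (by omega) (by omega)
      rw [e1, e2]
      have g1 : ((B-1:ℕ):ℤ) + a - c = tE c := by omega
      have g2 : ((B-1+1:ℕ):ℤ) + a - (c+1) = tE c := by omega
      rw [g1, g2, msw_right]
    rw [hfirst]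
    -- recombine
    have hIco : Finset.Ico c m = insert c (Finset.Ico (c+1) m) := by
      ext z
      simp only [Finset.mem_Ico, Finset.mem_insert]
      omega
    have hIcc : Finset.Icc c m = insert c (Finset.Icc (c+1) m) := by
      ext z
      simp only [Finset.mem_Icc, Finset.mem_insert]
      omega
    rw [hIco, hIcc, Finset.prod_insert (by simp), Finset.prod_insert (by simp)]
    ring

lemma walk_prod_full (hmono : Monotone tE) (hneg : tE (-1) = a) (htop : tE m = b)
    (hm : 1 ≤ m) (hu : (u:ℤ) = m + b - a) :
    ∏ j ∈ Finset.range u,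
        monoStepWeight π ω (walk a tE j) (walk a tE (j+1)) =
      (∏ x ∈ Finset.Ico (0:ℤ) m, π x) *
        ∏ x ∈ Finset.Icc (0:ℤ) m, ω x ^ (tE x - tE (x-1)).toNat := by
  have h0 : ((0 + tE (0-1) - a).toNat) = 0 := by
    have : (0:ℤ) - 1 = -1 := by ring
    rw [this]
    simp [hneg]
  have := walk_prod π ω a tE hmono hneg htop hm hu m.toNat 0 (le_refl _)
    (by omega) (by omega)
  rw [h0] at this
  rw [Finset.range_eq_Ico]
  exact this

end WalkProd

section Paths

/-- The valid monotone staircase profiles. -/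
noncomputable def Vk (lo hi : ℤ → ℤ) (a b m ℓ k : ℤ) : Finset (Fin m.toNat → ℤ) :=
  @Finset.filter _
    (fun t => Monotone (exts a b m t) ∧
      (∀ x, 0 ≤ x → x ≤ m → lo x ≤ exts a b m t (x-1) ∧ exts a b m t x ≤ hi x) ∧
      exts a b m t (ℓ - 1) = k)
    (fun _ => Classical.propDecidable _)
    (Finset.Icc (fun _ => a) (fun _ => b))

/-- The `ω`-weight of a profile. -/
noncomputable def Wt (ω : ℤ → ℝ) (a b m : ℤ) (t : Fin m.toNat → ℤ) : ℝ :=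
  ∏ x ∈ Finset.Icc (0:ℤ) m, ω x ^ (exts a b m t x - exts a b m t (x-1)).toNat

/-- The conditions from `monoExit`. -/
def Cond (lo hi : ℤ → ℤ) (a b m ℓ k : ℤ) (ξ : LatticePath) : Prop :=
  (ξ.1 : ℤ) = m + b - a ∧
  ξ.2 0 = (0, a) ∧ ξ.2 (Fin.last ξ.1) = (m, b) ∧
  (∀ t : Fin ξ.1, ξ.2 t.succ - ξ.2 t.castSucc ∈ monoSteps) ∧
  (∀ t, ξ.2 t ∈ Region m lo hi) ∧
  (∃ t, ξ.2 t = (ℓ, k) ∧ ∀ s < t, (ξ.2 s).1 ≠ ℓ)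

/-- The staircase path associated to a profile. -/
def pathOf (a b m : ℤ) (t : Fin m.toNat → ℤ) : LatticePath :=
  ⟨(m + b - a).toNat, fun j => walk a (exts a b m t) (j : ℕ)⟩

variable {lo hi : ℤ → ℤ} {a b m ℓ k : ℤ}

lemma mem_vk {t : Fin m.toNat → ℤ} :
    t ∈ Vk lo hi a b m ℓ k ↔
      (t ∈ Finset.Icc (fun _ => a) (fun _ => b) ∧
       (Monotone (exts a b m t) ∧
        (∀ x, 0 ≤ x → x ≤ m → lo x ≤ exts a b m t (x-1) ∧ exts a b m t x ≤ hi x) ∧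
        exts a b m t (ℓ - 1) = k)) := by
  rw [Vk]
  exact @Finset.mem_filter _ _ (fun _ => Classical.propDecidable _) _ _

lemma vk_spec {t : Fin m.toNat → ℤ} (ht : t ∈ Vk lo hi a b m ℓ k) :
    Monotone (exts a b m t) ∧
      (∀ x, 0 ≤ x → x ≤ m → lo x ≤ exts a b m t (x-1) ∧ exts a b m t x ≤ hi x) ∧
      exts a b m t (ℓ - 1) = k :=
  (mem_vk.mp ht).2

lemma vk_ab (hm : 1 ≤ m) {t : Fin m.toNat → ℤ} (ht : t ∈ Vk lo hi a b m ℓ k) :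
    a ≤ b := by
  have hmono := (vk_spec ht).1
  have := hmono (show (-1:ℤ) ≤ m by omega)
  rwa [exts_neg t (by omega), exts_top hm t (le_refl m)] at this

lemma pathOf_cond (hm : 1 ≤ m) (hℓ1 : 0 < ℓ) (hℓ2 : ℓ < m)
    {t : Fin m.toNat → ℤ} (ht : t ∈ Vk lo hi a b m ℓ k) :
    Cond lo hi a b m ℓ k (pathOf a b m t) := by
  obtain ⟨hmono, hcon, hcoord⟩ := vk_spec ht
  set tE := exts a b m t with htE
  have hneg : tE (-1) = a := exts_neg t (by omega)
  have htop : tE m = b := exts_top hm t (le_refl m)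
  have hab : a ≤ b := vk_ab hm ht
  set u : ℕ := (m + b - a).toNat with hudef
  have hu : (u:ℤ) = m + b - a := Int.toNat_of_nonneg (by omega)
  have hfst : (pathOf a b m t).fst = u := rfl
  refine ⟨hu, ?_, ?_, ?_, ?_, ?_⟩
  · show walk a tE ((0 : Fin (u+1)) : ℕ) = (0, a)
    simp [walk]
  · show walk a tE ((Fin.last u : Fin (u+1)) : ℕ) = (m, b)
    rw [Fin.val_last]
    have hmon1 : tE (m-1) ≤ tE m := hmono (by omega)
    have := walk_col a tE hmono hneg htop hm hu (u := u) (j := u) (le_refl u)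
      (c := m) (by omega) (le_refl m) (by omega) (by omega)
    rw [this]
    congr 1
    omega
  · intro j
    show walk a tE ((j.succ : Fin (u+1)) : ℕ) - walk a tE ((j.castSucc : Fin (u+1)) : ℕ) ∈ monoSteps
    rw [Fin.val_succ, Fin.coe_castSucc]
    exact walk_mem_steps a tE j
  · intro j
    show walk a tE (j : ℕ) ∈ Region m lo hi
    have hjlt := j.isLt
    have hj : (j : ℕ) ≤ u := by omega
    obtain ⟨i1, i2, i3, i4, i5⟩ := walk_inv a tE hmono hneg htop hm hu j hj
    set p := walk a tE (j : ℕ)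
    obtain ⟨c1, c2⟩ := hcon p.1 i1 i2
    exact ⟨i1, i2, by omega, by omega⟩
  · have h0 : tE (-1) ≤ tE (ℓ - 1) := hmono (by omega)
    have h1 : tE (ℓ-1) ≤ tE m := hmono (by omega)
    have h2 : tE (ℓ-1) ≤ tE ℓ := hmono (by omega)
    set j0 : ℕ := (ℓ + tE (ℓ-1) - a).toNat with hj0def
    have hj0 : (j0:ℤ) = ℓ + tE (ℓ-1) - a := Int.toNat_of_nonneg (by omega)
    have hj0u : j0 ≤ u := by omega
    refine ⟨⟨j0, by rw [hfst]; omega⟩, ?_, ?_⟩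
    · show walk a tE j0 = (ℓ, k)
      have := walk_col a tE hmono hneg htop hm hu (u := u) (j := j0) hj0u
        (c := ℓ) (by omega) (by omega) (by omega) (by omega)
      rw [this, ← hcoord]
      congr 1
      omega
    · intro s hs
      show (walk a tE (s : ℕ)).1 ≠ ℓ
      have hsj : (s : ℕ) < j0 := hs
      intro hcontra
      obtain ⟨i1, i2, i3, i4, i5⟩ := walk_inv a tE hmono hneg htop hm hu s (by omega)
      rw [hcontra] at i3 i4
      omega

lemma pathOf_weight (π ω : ℤ → ℝ) (hm : 1 ≤ m)
    {t : Fin m.toNat → ℤ} (ht : t ∈ Vk lo hi a b m ℓ k) :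
    (∏ j : Fin (pathOf a b m t).1,
      monoStepWeight π ω ((pathOf a b m t).2 j.castSucc) ((pathOf a b m t).2 j.succ)) =
      (∏ x ∈ Finset.Ico (0:ℤ) m, π x) * Wt ω a b m t := by
  obtain ⟨hmono, hcon, hcoord⟩ := vk_spec ht
  set tE := exts a b m t with htE
  have hneg : tE (-1) = a := exts_neg t (by omega)
  have htop : tE m = b := exts_top hm t (le_refl m)
  have hab : a ≤ b := vk_ab hm ht
  set u : ℕ := (m + b - a).toNat with hudef
  have hu : (u:ℤ) = m + b - a := Int.toNat_of_nonneg (by omega)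
  have : (∏ j : Fin (pathOf a b m t).1,
      monoStepWeight π ω ((pathOf a b m t).2 j.castSucc) ((pathOf a b m t).2 j.succ)) =
      ∏ j ∈ Finset.range u, monoStepWeight π ω (walk a tE j) (walk a tE (j+1)) := by
    rw [← Fin.prod_univ_eq_prod_range]
    apply Finset.prod_congr rfl
    intro j _
    congr 1
  rw [this, walk_prod_full π ω a tE hmono hneg htop hm hu]
  rfl

lemma pathOf_inj (hm : 1 ≤ m) {t t' : Fin m.toNat → ℤ}
    (ht : t ∈ Vk lo hi a b m ℓ k) (ht' : t' ∈ Vk lo hi a b m ℓ k)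
    (h : pathOf a b m t = pathOf a b m t') : t = t' := by
  obtain ⟨hmono, hcon, hcoord⟩ := vk_spec ht
  obtain ⟨hmono', hcon', hcoord'⟩ := vk_spec ht'
  set tE := exts a b m t with htEdef
  set tE' := exts a b m t' with htEdef'
  have hneg : tE (-1) = a := exts_neg t (by omega)
  have htop : tE m = b := exts_top hm t (le_refl m)
  have hneg' : tE' (-1) = a := exts_neg t' (by omega)
  have htop' : tE' m = b := exts_top hm t' (le_refl m)
  have hab : a ≤ b := vk_ab hm ht
  set u : ℕ := (m + b - a).toNat with hudef
  have hu : (u:ℤ) = m + b - a := Int.toNat_of_nonneg (by omega)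
  have hfun : ∀ j : ℕ, j ≤ u → walk a tE j = walk a tE' j := by
    intro j hj
    have h2 := congrArg
      (fun ξ : LatticePath => ξ.2 ⟨j % (ξ.1 + 1), Nat.mod_lt _ (Nat.succ_pos _)⟩) h
    have h3 : walk a tE (j % ((m + b - a).toNat + 1)) =
        walk a tE' (j % ((m + b - a).toNat + 1)) := h2
    rwa [Nat.mod_eq_of_lt (by omega)] at h3
  have main : ∀ c : ℤ, 0 ≤ c → c < m → tE c = tE' c := by
    intro c hc0 hcm
    have key : ∀ (s s' : ℤ → ℤ), Monotone s → s (-1) = a → s m = b →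
        Monotone s' → s' (-1) = a → s' m = b →
        (∀ j : ℕ, j ≤ u → walk a s j = walk a s' j) → s' c ≤ s c := by
      intro s s' hms hns hts hms' hns' hts' hf
      have hb1 : s c ≤ b := by
        have := hms (show c ≤ m by omega)
        omega
      have ha1 : a ≤ s (c-1) := by
        have := hms (show (-1:ℤ) ≤ c - 1 by omega)
        omega
      have ha2 : s (c-1) ≤ s c := hms (by omega)
      set j : ℕ := (c + 1 + s c - a).toNat with hjdef
      have hj : (j:ℤ) = c + 1 + s c - a := Int.toNat_of_nonneg (by omega)
      have hju : j ≤ u := by omega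
      have hcc0 : s (c + 1 - 1) = s c := by norm_num
      have hcc1 : s c ≤ s (c+1) := hms (by omega)
      have e1 : walk a s j = (c+1, (j:ℤ) + a - (c+1)) :=
        walk_col a s hms hns hts hm hu hju (by omega) (by omega) (by omega)
          (by omega)
      obtain ⟨i1, i2, i3, i4, i5⟩ := walk_inv a s' hms' hns' hts' hm hu j hju
      rw [← hf j hju, e1] at i4
      simp only at i4
      have : (j:ℤ) + a - (c+1) = s c := by omega
      rw [this] at i4
      have hcc : c + 1 - 1 = c := by ring
      rwa [hcc] at i4
    have h1 := key tE tE' hmono hneg htop hmono' hneg' htop' hfun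
    have h2 := key tE' tE hmono' hneg' htop' hmono hneg htop
      (fun j hj => (hfun j hj).symm)
    omega
  funext c
  have h1 := exts_fin (a := a) (b := b) t c
  have h2 := exts_fin (a := a) (b := b) t' c
  have h3 := main (c:ℤ) (by positivity) (by have := c.isLt; omega)
  rw [htEdef, htEdef'] at h3
  rw [h1, h2] at h3
  exact h3

/-- Extraction of the profile from a path. -/
def wN (ξ : LatticePath) (j : ℕ) : ℤ × ℤ := ξ.2 ⟨min j ξ.1, by omega⟩

noncomputable def ft (ξ : LatticePath) (v : ℤ) : ℕ := sInf {j : ℕ | (wN ξ j).1 = v}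

noncomputable def extract (m : ℤ) (ξ : LatticePath) : Fin m.toNat → ℤ :=
  fun c => (wN ξ (ft ξ ((c:ℤ) + 1))).2

lemma wN_eq (n : ℕ) (w : Fin (n+1) → ℤ × ℤ) (j : ℕ) (i : Fin (n+1))
    (hi : (i:ℕ) = min j n) : wN ⟨n, w⟩ j = w i := by
  unfold wN
  have he : (⟨min j n, by omega⟩ : Fin (n+1)) = i := Fin.ext (by simp [hi])
  rw [he]

lemma extract_good (hm : 1 ≤ m) (hℓ1 : 0 < ℓ) (hℓ2 : ℓ < m)
    {ξ : LatticePath} (hξ : Cond lo hi a b m ℓ k ξ) :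
    extract m ξ ∈ Vk lo hi a b m ℓ k ∧ pathOf a b m (extract m ξ) = ξ := by
  obtain ⟨n, w⟩ := ξ
  obtain ⟨hlen, h0, hlast, hsteps, hreg, hhit⟩ := hξ
  simp only at hlen h0 hlast hsteps hreg hhit
  have hw0 : wN ⟨n, w⟩ 0 = (0, a) := by
    rw [wN_eq n w 0 0 (by simp)]
    exact h0
  have hwn : wN ⟨n, w⟩ n = (m, b) := by
    rw [wN_eq n w n (Fin.last n) (by simp)]
    exact hlast
  have hw01 : (wN ⟨n,w⟩ 0).1 = 0 := by rw [hw0]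
  have hw02 : (wN ⟨n,w⟩ 0).2 = a := by rw [hw0]
  have hwn1 : (wN ⟨n,w⟩ n).1 = m := by rw [hwn]
  have hwn2 : (wN ⟨n,w⟩ n).2 = b := by rw [hwn]
  have hwreg : ∀ j : ℕ, wN ⟨n, w⟩ j ∈ Region m lo hi := fun j => hreg _
  have hstep2 : ∀ j, j < n →
      (wN ⟨n, w⟩ (j+1) = ((wN ⟨n, w⟩ j).1 + 1, (wN ⟨n, w⟩ j).2) ∨
       wN ⟨n, w⟩ (j+1) = ((wN ⟨n, w⟩ j).1, (wN ⟨n, w⟩ j).2 + 1)) := by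
    intro j hj
    have h := hsteps ⟨j, hj⟩
    rw [← wN_eq n w (j+1) (Fin.succ ⟨j, hj⟩) (by simp; omega),
        ← wN_eq n w j (Fin.castSucc ⟨j, hj⟩) (by simp; omega)] at h
    simp only [monoSteps, Set.mem_insert_iff, Set.mem_singleton_iff] at h
    rcases h with h | h
    · left
      have h1 := congrArg Prod.fst h
      have h2 := congrArg Prod.snd h
      simp only [Prod.fst_sub, Prod.snd_sub] at h1 h2
      norm_num at h1 h2
      refine Prod.ext ?_ ?_ <;> dsimp only <;> omega
    · right
      have h1 := congrArg Prod.fst h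
      have h2 := congrArg Prod.snd h
      simp only [Prod.fst_sub, Prod.snd_sub] at h1 h2
      norm_num at h1 h2
      refine Prod.ext ?_ ?_ <;> dsimp only <;> omega
  have hstepx : ∀ j, j < n → (wN ⟨n,w⟩ j).1 ≤ (wN ⟨n,w⟩ (j+1)).1 ∧
      (wN ⟨n,w⟩ (j+1)).1 ≤ (wN ⟨n,w⟩ j).1 + 1 ∧
      (wN ⟨n,w⟩ j).2 ≤ (wN ⟨n,w⟩ (j+1)).2 ∧
      (wN ⟨n,w⟩ (j+1)).2 ≤ (wN ⟨n,w⟩ j).2 + 1 ∧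
      (wN ⟨n,w⟩ j).1 + (wN ⟨n,w⟩ j).2 + 1 = (wN ⟨n,w⟩ (j+1)).1 + (wN ⟨n,w⟩ (j+1)).2 := by
    intro j hj
    rcases hstep2 j hj with h | h <;> rw [h] <;> dsimp only <;> omega
  have hxmono : ∀ i j : ℕ, i ≤ j → j ≤ n → (wN ⟨n,w⟩ i).1 ≤ (wN ⟨n,w⟩ j).1 := by
    intro i j hij hjn
    induction j with
    | zero =>
      have : i = 0 := by omega
      rw [this]
    | succ j ih =>
      by_cases hc : i = j + 1
      · rw [hc]
      · have h1 := ih (by omega) (by omega)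
        have h2 := (hstepx j (by omega)).1
        omega
  have hymono : ∀ i j : ℕ, i ≤ j → j ≤ n → (wN ⟨n,w⟩ i).2 ≤ (wN ⟨n,w⟩ j).2 := by
    intro i j hij hjn
    induction j with
    | zero =>
      have : i = 0 := by omega
      rw [this]
    | succ j ih =>
      by_cases hc : i = j + 1
      · rw [hc]
      · have h1 := ih (by omega) (by omega)
        have h2 := (hstepx j (by omega)).2.2.1
        omega
  have hIVT : ∀ jj, jj ≤ n → ∀ v : ℤ, 0 ≤ v → v ≤ (wN ⟨n,w⟩ jj).1 →
      ∃ j, j ≤ jj ∧ (wN ⟨n,w⟩ j).1 = v := by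
    intro jj
    induction jj with
    | zero =>
      intro _ v h0v h1v
      refine ⟨0, le_rfl, ?_⟩
      have he : (wN ⟨n,w⟩ 0).1 = 0 := by rw [hw0]
      omega
    | succ jj ih =>
      intro hjn v h0v h1v
      by_cases hc : v ≤ (wN ⟨n,w⟩ jj).1
      · obtain ⟨j, hj1, hj2⟩ := ih (by omega) v h0v hc
        exact ⟨j, by omega, hj2⟩
      · have h2 := (hstepx jj (by omega)).2.1
        exact ⟨jj+1, le_rfl, by omega⟩
  have hcoordn : (wN ⟨n,w⟩ n).1 = m := by rw [hwn]
  have hft : ∀ v : ℤ, 0 ≤ v → v ≤ m → ft ⟨n,w⟩ v ≤ n ∧ (wN ⟨n,w⟩ (ft ⟨n,w⟩ v)).1 = v := by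
    intro v h0v h1v
    obtain ⟨j0, hj0, hj0c⟩ := hIVT n le_rfl v h0v (by omega)
    refine ⟨le_trans (Nat.sInf_le hj0c) hj0, ?_⟩
    exact Nat.sInf_mem (s := {j : ℕ | (wN ⟨n,w⟩ j).1 = v}) ⟨j0, hj0c⟩
  have hftle : ∀ (v : ℤ) (j : ℕ), (wN ⟨n,w⟩ j).1 = v → ft ⟨n,w⟩ v ≤ j :=
    fun v j h => Nat.sInf_le h
  have hftlt : ∀ (v : ℤ) (j : ℕ), j < ft ⟨n,w⟩ v → ¬ (wN ⟨n,w⟩ j).1 = v :=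
    fun v j h => Nat.notMem_of_lt_sInf h
  set tS := extract m ⟨n, w⟩ with htS
  set tE' := exts a b m tS with htE
  have hmid : ∀ x : ℤ, 0 ≤ x → x < m → tE' x = (wN ⟨n,w⟩ (ft ⟨n,w⟩ (x+1))).2 := by
    intro x h0x h1x
    rw [htE, exts_mid tS h0x h1x, htS]
    show (wN ⟨n,w⟩ (ft ⟨n,w⟩
      (((⟨x.toNat, by omega⟩ : Fin m.toNat) : ℤ) + 1))).2 = _
    rw [show ((⟨x.toNat, by omega⟩ : Fin m.toNat) : ℤ) = x by
      simp [Int.toNat_of_nonneg h0x]]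
  have hfin : ∀ c : Fin m.toNat, 0 ≤ (c:ℤ) ∧ (c:ℤ) < m := by
    intro c
    have := c.isLt
    omega
  have htopE : tE' m = b := by rw [htE]; exact exts_top hm tS (le_refl m)
  have hnegE : tE' (-1) = a := by rw [htE]; exact exts_neg tS (by omega)
  -- the walk coincides with the path
  have hweq : ∀ j, j ≤ n → wN ⟨n,w⟩ j = walk a tE' j := by
    intro j
    induction j with
    | zero =>
      intro _
      rw [hw0]
      rfl
    | succ j ih =>
      intro hj
      have hjn : j < n := by omega
      have ihe := ih (by omega)
      obtain ⟨r1, r2, r3, r4⟩ := hwreg j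
      have hwalkstep : walk a tE' (j+1) =
          if tE' (walk a tE' j).1 ≤ (walk a tE' j).2
          then ((walk a tE' j).1 + 1, (walk a tE' j).2)
          else ((walk a tE' j).1, (walk a tE' j).2 + 1) := rfl
      rcases hstep2 j hjn with hc | hc
      · -- right step
        have hco1 : (wN ⟨n,w⟩ (j+1)).1 = (wN ⟨n,w⟩ j).1 + 1 := by rw [hc]
        have hco2 : (wN ⟨n,w⟩ (j+1)).2 = (wN ⟨n,w⟩ j).2 := by rw [hc]
        have hle : (wN ⟨n,w⟩ j).1 + 1 ≤ m := by
          have := (hwreg (j+1)).2.1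
          omega
        have hfle := hftle ((wN ⟨n,w⟩ j).1 + 1) (j+1) (by omega)
        have hmid1 : tE' (wN ⟨n,w⟩ j).1 =
            (wN ⟨n,w⟩ (ft ⟨n,w⟩ ((wN ⟨n,w⟩ j).1+1))).2 := hmid _ r1 (by omega)
        have hy : tE' (wN ⟨n,w⟩ j).1 ≤ (wN ⟨n,w⟩ j).2 := by
          have h5 := hymono (ft ⟨n,w⟩ ((wN ⟨n,w⟩ j).1+1)) (j+1) hfle (by omega)
          rw [hmid1]
          omega
        rw [hwalkstep, ← ihe, if_pos hy, hc]
      · -- up step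
        have hco2 : (wN ⟨n,w⟩ (j+1)).2 = (wN ⟨n,w⟩ j).2 + 1 := by rw [hc]
        have hy' : (wN ⟨n,w⟩ j).2 < tE' (wN ⟨n,w⟩ j).1 := by
          by_cases hxm : (wN ⟨n,w⟩ j).1 = m
          · have hyb : (wN ⟨n,w⟩ (j+1)).2 ≤ b := by
              have h5 := hymono (j+1) n (by omega) le_rfl
              omega
            rw [hxm, htopE]
            omega

          · have hxlt : (wN ⟨n,w⟩ j).1 < m := by omega
            have hj1 := hft ((wN ⟨n,w⟩ j).1 + 1) (by omega) (by omega)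
            have hj1gt : j + 1 < ft ⟨n,w⟩ ((wN ⟨n,w⟩ j).1 + 1) := by
              rcases Nat.lt_or_ge (j+1) (ft ⟨n,w⟩ ((wN ⟨n,w⟩ j).1 + 1)) with hcl | hcl
              · exact hcl
              · exfalso
                have hco1 : (wN ⟨n,w⟩ (j+1)).1 = (wN ⟨n,w⟩ j).1 := by rw [hc]
                have h6 := hxmono (ft ⟨n,w⟩ ((wN ⟨n,w⟩ j).1 + 1)) (j+1) hcl (by omega)
                omega
            have h5 := hymono (j+1) (ft ⟨n,w⟩ ((wN ⟨n,w⟩ j).1 + 1)) (by omega) hj1.1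
            rw [hmid _ r1 hxlt]
            omega
        rw [hwalkstep, ← ihe, if_neg (by omega), hc]
  -- membership in Vk
  have hmemIcc : tS ∈ Finset.Icc (fun _ => a) (fun _ => b) := by
    rw [Finset.mem_Icc]
    constructor <;> intro c
    · show a ≤ (wN ⟨n,w⟩ (ft ⟨n,w⟩ ((c:ℤ)+1))).2
      obtain ⟨hc1, hc2⟩ := hfin c
      have h5 := hymono 0 (ft ⟨n,w⟩ ((c:ℤ)+1)) (by omega) (hft ((c:ℤ)+1) (by omega) (by omega)).1
      omega
    · show (wN ⟨n,w⟩ (ft ⟨n,w⟩ ((c:ℤ)+1))).2 ≤ b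
      obtain ⟨hc1, hc2⟩ := hfin c
      have h5 := hymono (ft ⟨n,w⟩ ((c:ℤ)+1)) n (hft ((c:ℤ)+1) (by omega) (by omega)).1 le_rfl
      omega
  have hftmono : ∀ v v' : ℤ, 0 ≤ v → v ≤ v' → v' ≤ m → ft ⟨n,w⟩ v ≤ ft ⟨n,w⟩ v' := by
    intro v v' h0v hvv hvm
    have h1 := hft v' (by omega) hvm
    obtain ⟨j, hj1, hj2⟩ := hIVT (ft ⟨n,w⟩ v') h1.1 v h0v (by omega)
    exact le_trans (hftle v j hj2) hj1
  have hmono' : Monotone tE' := by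
    apply monotone_int_of_le_succ
    intro x
    by_cases h1 : x < -1
    · rw [htE, exts_neg tS (by omega), exts_neg tS (by omega)]
    by_cases h2 : x = -1
    · subst h2
      norm_num
      rw [hnegE, hmid 0 (by omega) (by omega)]
      have h5 := hymono 0 (ft ⟨n,w⟩ (0+1)) (by omega) (hft (0+1) (by omega) (by omega)).1
      omega
    by_cases h3 : x + 1 < m
    · have h0x : 0 ≤ x := by omega
      rw [hmid x h0x (by omega), hmid (x+1) (by omega) h3]
      have hle := hftmono (x+1) (x+1+1) (by omega) (by omega) (by omega)
      exact hymono _ _ hle (hft (x+1+1) (by omega) (by omega)).1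
    by_cases h4 : x + 1 = m
    · rw [hmid x (by omega) (by omega)]
      have h5 := hymono (ft ⟨n,w⟩ (x+1)) n (hft (x+1) (by omega) (by omega)).1 le_rfl
      have h6 : tE' (x+1) = b := by rw [htE]; exact exts_top hm tS (by omega)
      omega
    · rw [htE, exts_top hm tS (by omega), exts_top hm tS (by omega)]
  have hcons : ∀ x, 0 ≤ x → x ≤ m → lo x ≤ tE' (x-1) ∧ tE' x ≤ hi x := by
    intro x h0x h1x
    constructor
    · by_cases hx0 : x = 0
      · subst hx0
        have hr := hwreg 0
        rw [hw0] at hr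
        norm_num
        rw [hnegE]
        exact hr.2.2.1
      · have h2 : tE' (x-1) = (wN ⟨n,w⟩ (ft ⟨n,w⟩ x)).2 := by
          have h3 := hmid (x-1) (by omega) (by omega)
          have hxx : x - 1 + 1 = x := by ring
          rw [hxx] at h3
          exact h3
        have hco := hft x (by omega) h1x
        obtain ⟨q1, q2, q3, q4⟩ := hwreg (ft ⟨n,w⟩ x)
        rw [h2]
        rw [hco.2] at q3
        exact q3
    · by_cases hxm : x = m
      · subst hxm
        have hr := hwreg n
        rw [hwn] at hr
        rw [htopE]
        exact hr.2.2.2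
      · have hxlt : x < m := by omega
        have hj1 := hft (x+1) (by omega) (by omega)
        have hj1pos : 0 < ft ⟨n,w⟩ (x+1) := by
          rcases Nat.eq_zero_or_pos (ft ⟨n,w⟩ (x+1)) with h | h
          · exfalso
            rw [h] at hj1
            rw [hw0] at hj1
            simp at hj1
            omega
          · exact h
        have hj1n : ft ⟨n,w⟩ (x+1) - 1 < n := by omega
        have hprev := hstep2 (ft ⟨n,w⟩ (x+1) - 1) hj1n
        have hj11 : ft ⟨n,w⟩ (x+1) - 1 + 1 = ft ⟨n,w⟩ (x+1) := by omega
        rw [hj11] at hprev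
        rcases hprev with hch | hch
        · have hcoj : (wN ⟨n,w⟩ (ft ⟨n,w⟩ (x+1) - 1)).1 = x := by
            have h6 := congrArg Prod.fst hch
            dsimp only at h6
            omega
          have hsnd : (wN ⟨n,w⟩ (ft ⟨n,w⟩ (x+1))).2 =
              (wN ⟨n,w⟩ (ft ⟨n,w⟩ (x+1) - 1)).2 := by
            have h6 := congrArg Prod.snd hch
            dsimp only at h6
            omega
          obtain ⟨q1, q2, q3, q4⟩ := hwreg (ft ⟨n,w⟩ (x+1) - 1)
          rw [hmid x h0x hxlt, hsnd]
          rw [hcoj] at q4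
          exact q4
        · exfalso
          have hcoj : (wN ⟨n,w⟩ (ft ⟨n,w⟩ (x+1) - 1)).1 = x + 1 := by
            have h6 := congrArg Prod.fst hch
            dsimp only at h6
            omega
          exact hftlt (x+1) (ft ⟨n,w⟩ (x+1) - 1) (by omega) hcoj
  have hcoord : tE' (ℓ-1) = k := by
    obtain ⟨tstar, htstar, hmin⟩ := hhit
    have hws : wN ⟨n,w⟩ (tstar : ℕ) = (ℓ, k) := by
      rw [wN_eq n w (tstar:ℕ) tstar (by simp; omega)]
      exact htstar
    have hftl : ft ⟨n,w⟩ ℓ = (tstar : ℕ) := by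
      have hle2 := hftle ℓ (tstar:ℕ) (by rw [hws])
      rcases Nat.lt_or_ge (ft ⟨n,w⟩ ℓ) (tstar:ℕ) with hlt | hge
      · exfalso
        have hcf := (hft ℓ (by omega) (by omega)).2
        have h7 := hmin ⟨ft ⟨n,w⟩ ℓ, by omega⟩ (by
          rw [Fin.lt_def]
          exact hlt)
        rw [← wN_eq n w (ft ⟨n,w⟩ ℓ) ⟨ft ⟨n,w⟩ ℓ, by omega⟩ (by simp; omega)] at h7
        exact h7 hcf
      · omega
    have hx : tE' (ℓ-1) = (wN ⟨n,w⟩ (ft ⟨n,w⟩ ℓ)).2 := by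
      have h3 := hmid (ℓ-1) (by omega) (by omega)
      have hxx : ℓ - 1 + 1 = ℓ := by ring
      rw [hxx] at h3
      exact h3
    rw [hx, hftl, hws]
  refine ⟨mem_vk.mpr ⟨hmemIcc, hmono', hcons, hcoord⟩, ?_⟩
  -- path equality
  have hnu : (m + b - a).toNat = n := by omega
  subst hnu
  have hfun : (fun j : Fin ((m+b-a).toNat + 1) => walk a tE' (j:ℕ)) = w := by
    funext j
    have h1 := hweq (j:ℕ) (by omega)
    rw [← h1]
    exact wN_eq _ w (j:ℕ) j (by simp; omega)
  exact congrArg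
    (fun f : Fin ((m+b-a).toNat + 1) → ℤ × ℤ => (⟨(m+b-a).toNat, f⟩ : LatticePath)) hfun

variable (lo hi) (a b m ℓ k) in
noncomputable def pathEquiv (hm : 1 ≤ m) (hℓ1 : 0 < ℓ) (hℓ2 : ℓ < m) :
    {t : Fin m.toNat → ℤ // t ∈ Vk lo hi a b m ℓ k} ≃
      {ξ : LatticePath // Cond lo hi a b m ℓ k ξ} :=
  Equiv.ofBijective
    (fun t => ⟨pathOf a b m t.1, pathOf_cond hm hℓ1 hℓ2 t.2⟩)
    (by
      constructor
      · intro t t' h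
        have := congrArg Subtype.val h
        exact Subtype.ext (pathOf_inj hm t.2 t'.2 this)
      · intro ξ
        obtain ⟨h1, h2⟩ := extract_good hm hℓ1 hℓ2 ξ.2
        exact ⟨⟨extract m ξ.1, h1⟩, Subtype.ext h2⟩)

lemma monoExit_eq (hm : 1 ≤ m) (hℓ1 : 0 < ℓ) (hℓ2 : ℓ < m) (π ω : ℤ → ℝ) :
    monoExit π ω (Region m lo hi) a m b ℓ k =
      (∏ x ∈ Finset.Ico (0:ℤ) m, π x) * ∑ t ∈ Vk lo hi a b m ℓ k, Wt ω a b m t := by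
  have hrfl : monoExit π ω (Region m lo hi) a m b ℓ k =
      ∑' ξ : {ξ : LatticePath // Cond lo hi a b m ℓ k ξ},
        ∏ j : Fin ξ.1.1, monoStepWeight π ω (ξ.1.2 j.castSucc) (ξ.1.2 j.succ) := rfl
  rw [hrfl, ← Equiv.tsum_eq (pathEquiv lo hi a b m ℓ k hm hℓ1 hℓ2), tsum_fintype]
  have step : (∑ i : {t : Fin m.toNat → ℤ // t ∈ Vk lo hi a b m ℓ k},
      ∏ j : Fin ((pathOf a b m i.1).1),
        monoStepWeight π ω ((pathOf a b m i.1).2 j.castSucc) ((pathOf a b m i.1).2 j.succ))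
      = (∏ x ∈ Finset.Ico (0:ℤ) m, π x) * ∑ t ∈ Vk lo hi a b m ℓ k, Wt ω a b m t := by
    rw [Finset.sum_congr rfl (fun i _ => pathOf_weight π ω hm i.2)]
    rw [← Finset.mul_sum]
    rw [Finset.sum_coe_sort (Vk lo hi a b m ℓ k) (fun t => Wt ω a b m t)]
  exact step

end Paths

section AD

open scoped FinsetFamily

variable {lo hi : ℤ → ℤ} {a b m ℓ k : ℤ}

lemma wt_nonneg (ω : ℤ → ℝ) (hω : ∀ i, 0 ≤ ω i) (t : Fin m.toNat → ℤ) :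
    0 ≤ Wt ω a b m t :=
  Finset.prod_nonneg fun x _ => pow_nonneg (hω x) _


lemma vk_inf_sup (hm : 1 ≤ m) (hℓ1 : 0 < ℓ) (hℓ2 : ℓ < m) (ω : ℤ → ℝ)
    {p s : Fin m.toNat → ℤ}
    (hp : p ∈ Vk lo hi a b m ℓ (k+1)) (hs : s ∈ Vk lo hi a b m ℓ (k-1)) :
    (p ⊓ (s + 1)) ∈ Vk lo hi a b m ℓ k ∧ (p ⊔ (s + 1) - 1) ∈ Vk lo hi a b m ℓ k ∧
    Wt ω a b m p * Wt ω a b m s =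
      Wt ω a b m (p ⊓ (s + 1)) * Wt ω a b m (p ⊔ (s + 1) - 1) := by
  obtain ⟨hpIcc, hpm, hpc, hpk⟩ := mem_vk.mp hp
  obtain ⟨hsIcc, hsm, hsc, hsk⟩ := mem_vk.mp hs
  rw [Finset.mem_Icc] at hpIcc hsIcc
  have hpl : ∀ c, a ≤ p c := fun c => hpIcc.1 c
  have hpu : ∀ c, p c ≤ b := fun c => hpIcc.2 c
  have hsl : ∀ c, a ≤ s c := fun c => hsIcc.1 c
  have hsu : ∀ c, s c ≤ b := fun c => hsIcc.2 c
  set Ep := exts a b m p with hEp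
  set Es := exts a b m s with hEs
  set U := p ⊓ (s + 1) with hUdef
  set V := p ⊔ (s + 1) - 1 with hVdef
  set EU := exts a b m U with hEU
  set EV := exts a b m V with hEV
  have hUmid : ∀ x : ℤ, 0 ≤ x → x < m → EU x = min (Ep x) (Es x + 1) := by
    intro x h0 h1
    rw [hEU, hEp, hEs, exts_mid _ (by omega) h1, exts_mid _ (by omega) h1,
      exts_mid _ (by omega) h1, hUdef]
    simp [Pi.inf_apply]
  have hVmid : ∀ x : ℤ, 0 ≤ x → x < m → EV x = max (Ep x) (Es x + 1) - 1 := by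
    intro x h0 h1
    rw [hEV, hEp, hEs, exts_mid _ (by omega) h1, exts_mid _ (by omega) h1,
      exts_mid _ (by omega) h1, hVdef]
    simp [Pi.sub_apply, Pi.sup_apply]
  have hU : ∀ x : ℤ, (0 ≤ x ∧ x < m ∧ EU x = min (Ep x) (Es x + 1)) ∨
      (x < 0 ∧ EU x = a ∧ Ep x = a ∧ Es x = a) ∨
      (m ≤ x ∧ EU x = b ∧ Ep x = b ∧ Es x = b) := by
    intro x
    by_cases h0 : x < 0
    · exact Or.inr (Or.inl ⟨h0, exts_neg _ h0, exts_neg _ h0, exts_neg _ h0⟩)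
    by_cases h1 : x < m
    · exact Or.inl ⟨by omega, h1, hUmid x (by omega) h1⟩
    · exact Or.inr (Or.inr ⟨by omega, exts_top hm _ (by omega),
        exts_top hm _ (by omega), exts_top hm _ (by omega)⟩)
  have hV : ∀ x : ℤ, (0 ≤ x ∧ x < m ∧ EV x = max (Ep x) (Es x + 1) - 1) ∨
      (x < 0 ∧ EV x = a ∧ Ep x = a ∧ Es x = a) ∨
      (m ≤ x ∧ EV x = b ∧ Ep x = b ∧ Es x = b) := by
    intro x
    by_cases h0 : x < 0
    · exact Or.inr (Or.inl ⟨h0, exts_neg _ h0, exts_neg _ h0, exts_neg _ h0⟩)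
    by_cases h1 : x < m
    · exact Or.inl ⟨by omega, h1, hVmid x (by omega) h1⟩
    · exact Or.inr (Or.inr ⟨by omega, exts_top hm _ (by omega),
        exts_top hm _ (by omega), exts_top hm _ (by omega)⟩)
  have hsum : ∀ x : ℤ, EU x + EV x = Ep x + Es x := by
    intro x
    rcases hU x with ⟨h0, h1, h2⟩ | ⟨h0, h2, h3, h4⟩ | ⟨h0, h2, h3, h4⟩ <;>
      rcases hV x with ⟨g0, g1, g2⟩ | ⟨g0, g2, g3, g4⟩ | ⟨g0, g2, g3, g4⟩ <;>
      omega
  have hUmono : Monotone EU := by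
    apply monotone_int_of_le_succ
    intro x
    have hp1 : Ep x ≤ Ep (x+1) := hpm (by omega)
    have hs1 : Es x ≤ Es (x+1) := hsm (by omega)
    rcases hU x with ⟨h0, h1, h2⟩ | ⟨h0, h2, h3, h4⟩ | ⟨h0, h2, h3, h4⟩ <;>
      rcases hU (x+1) with ⟨g0, g1, g2⟩ | ⟨g0, g2, g3, g4⟩ | ⟨g0, g2, g3, g4⟩ <;>
      omega
  have hVmono : Monotone EV := by
    apply monotone_int_of_le_succ
    intro x
    have hp1 : Ep x ≤ Ep (x+1) := hpm (by omega)
    have hs1 : Es x ≤ Es (x+1) := hsm (by omega)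
    rcases hV x with ⟨h0, h1, h2⟩ | ⟨h0, h2, h3, h4⟩ | ⟨h0, h2, h3, h4⟩ <;>
      rcases hV (x+1) with ⟨g0, g1, g2⟩ | ⟨g0, g2, g3, g4⟩ | ⟨g0, g2, g3, g4⟩ <;>
      omega
  have hUIcc : U ∈ Finset.Icc (fun _ => a) (fun _ => b) := by
    rw [Finset.mem_Icc]
    constructor <;> intro c <;>
      simp only [hUdef, Pi.inf_apply, Pi.add_apply, Pi.one_apply] <;>
      [skip; skip] <;>
      · have := hpl c; have := hpu c; have := hsl c; have := hsu c
        omega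
  have hVIcc : V ∈ Finset.Icc (fun _ => a) (fun _ => b) := by
    rw [Finset.mem_Icc]
    constructor <;> intro c <;>
      simp only [hVdef, Pi.sub_apply, Pi.sup_apply, Pi.add_apply, Pi.one_apply] <;>
      · have := hpl c; have := hpu c; have := hsl c; have := hsu c
        omega
  have hUcons : ∀ x, 0 ≤ x → x ≤ m → lo x ≤ EU (x-1) ∧ EU x ≤ hi x := by
    intro x h0 h1
    obtain ⟨c1, c2⟩ := hpc x h0 h1
    obtain ⟨d1, d2⟩ := hsc x h0 h1
    constructor
    · rcases hU (x-1) with ⟨g0, g1, g2⟩ | ⟨g0, g2, g3, g4⟩ | ⟨g0, g2, g3, g4⟩ <;> omega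
    · rcases hU x with ⟨g0, g1, g2⟩ | ⟨g0, g2, g3, g4⟩ | ⟨g0, g2, g3, g4⟩ <;> omega
  have hVcons : ∀ x, 0 ≤ x → x ≤ m → lo x ≤ EV (x-1) ∧ EV x ≤ hi x := by
    intro x h0 h1
    obtain ⟨c1, c2⟩ := hpc x h0 h1
    obtain ⟨d1, d2⟩ := hsc x h0 h1
    constructor
    · rcases hV (x-1) with ⟨g0, g1, g2⟩ | ⟨g0, g2, g3, g4⟩ | ⟨g0, g2, g3, g4⟩ <;> omega
    · rcases hV x with ⟨g0, g1, g2⟩ | ⟨g0, g2, g3, g4⟩ | ⟨g0, g2, g3, g4⟩ <;> omega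
  have hUk : EU (ℓ-1) = k := by
    have := hUmid (ℓ-1) (by omega) (by omega)
    omega
  have hVk2 : EV (ℓ-1) = k := by
    have := hVmid (ℓ-1) (by omega) (by omega)
    omega
  refine ⟨mem_vk.mpr ⟨hUIcc, hUmono, hUcons, hUk⟩,
    mem_vk.mpr ⟨hVIcc, hVmono, hVcons, hVk2⟩, ?_⟩
  rw [Wt, Wt, Wt, Wt, ← Finset.prod_mul_distrib, ← Finset.prod_mul_distrib]
  apply Finset.prod_congr rfl
  intro x hx
  rw [Finset.mem_Icc] at hx
  rw [← pow_add, ← pow_add]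
  simp only [← hEU, ← hEV, ← hEp, ← hEs]
  congr 1
  have m1 : Ep (x-1) ≤ Ep x := hpm (by omega)
  have m2 : Es (x-1) ≤ Es x := hsm (by omega)
  have m3 : EU (x-1) ≤ EU x := hUmono (by omega)
  have m4 : EV (x-1) ≤ EV x := hVmono (by omega)
  have e1 := hsum x
  have e2 := hsum (x-1)
  omega

lemma sum_vk_sq (hm : 1 ≤ m) (hℓ1 : 0 < ℓ) (hℓ2 : ℓ < m) (ω : ℤ → ℝ)
    (hω : ∀ i, 0 ≤ ω i) :
    (∑ t ∈ Vk lo hi a b m ℓ (k+1), Wt ω a b m t) *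
      (∑ t ∈ Vk lo hi a b m ℓ (k-1), Wt ω a b m t) ≤
    (∑ t ∈ Vk lo hi a b m ℓ k, Wt ω a b m t) ^ 2 := by
  classical
  set W : (Fin m.toNat → ℤ) → ℝ := Wt ω a b m with hW
  have hWn : ∀ t, 0 ≤ W t := wt_nonneg ω hω
  set f₁ : (Fin m.toNat → ℤ) → ℝ :=
    fun t => if t ∈ Vk lo hi a b m ℓ (k+1) then W t else 0 with hf₁
  set f₂ : (Fin m.toNat → ℤ) → ℝ :=
    fun t => if t - 1 ∈ Vk lo hi a b m ℓ (k-1) then W (t - 1) else 0 with hf₂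
  set f₃ : (Fin m.toNat → ℤ) → ℝ :=
    fun t => if t ∈ Vk lo hi a b m ℓ k then W t else 0 with hf₃
  set f₄ : (Fin m.toNat → ℤ) → ℝ :=
    fun t => if t - 1 ∈ Vk lo hi a b m ℓ k then W (t - 1) else 0 with hf₄
  have h₁ : 0 ≤ f₁ := fun t => by rw [hf₁]; dsimp only; split <;> simp [hWn]
  have h₂ : 0 ≤ f₂ := fun t => by rw [hf₂]; dsimp only; split <;> simp [hWn]
  have h₃ : 0 ≤ f₃ := fun t => by rw [hf₃]; dsimp only; split <;> simp [hWn]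
  have h₄ : 0 ≤ f₄ := fun t => by rw [hf₄]; dsimp only; split <;> simp [hWn]
  have hcond : ∀ p q, f₁ p * f₂ q ≤ f₃ (p ⊓ q) * f₄ (p ⊔ q) := by
    intro p q
    by_cases hp : p ∈ Vk lo hi a b m ℓ (k+1)
    · by_cases hq : q - 1 ∈ Vk lo hi a b m ℓ (k-1)
      · obtain ⟨hu, hv, he⟩ := vk_inf_sup hm hℓ1 hℓ2 ω hp hq
        have hq2 : (q - 1) + 1 = q := by ring
        rw [hq2] at hu hv he
        have e₁ : f₁ p = W p := by rw [hf₁]; exact if_pos hp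
        have e₂ : f₂ q = W (q - 1) := by rw [hf₂]; exact if_pos hq
        have e₃ : f₃ (p ⊓ q) = W (p ⊓ q) := by rw [hf₃]; exact if_pos hu
        have e₄ : f₄ (p ⊔ q) = W (p ⊔ q - 1) := by rw [hf₄]; exact if_pos hv
        rw [e₁, e₂, e₃, e₄]
        exact le_of_eq he
      · have e₂ : f₂ q = 0 := by rw [hf₂]; exact if_neg hq
        rw [e₂, mul_zero]
        exact mul_nonneg (h₃ _) (h₄ _)
    · have e₁ : f₁ p = 0 := by rw [hf₁]; exact if_neg hp
      rw [e₁, zero_mul]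
      exact mul_nonneg (h₃ _) (h₄ _)
  have had := four_functions_theorem f₁ f₂ f₃ f₄ h₁ h₂ h₃ h₄ hcond
    (Vk lo hi a b m ℓ (k+1)) ((Vk lo hi a b m ℓ (k-1)).image (· + 1))
  have hs1 : ∑ t ∈ Vk lo hi a b m ℓ (k+1), f₁ t =
      ∑ t ∈ Vk lo hi a b m ℓ (k+1), W t :=
    Finset.sum_congr rfl fun t ht => by rw [hf₁]; exact if_pos ht
  have hs2 : ∑ t ∈ (Vk lo hi a b m ℓ (k-1)).image (· + 1), f₂ t =
      ∑ t ∈ Vk lo hi a b m ℓ (k-1), W t := by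
    rw [Finset.sum_image (fun x _ y _ h => by
      have := congrArg (· - (1 : Fin m.toNat → ℤ)) h
      simpa using this)]
    apply Finset.sum_congr rfl
    intro t ht
    rw [hf₂]
    simp only [add_sub_cancel_right]
    exact if_pos ht
  have hb3 : ∑ t ∈ Vk lo hi a b m ℓ (k+1) ⊼ (Vk lo hi a b m ℓ (k-1)).image (· + 1), f₃ t ≤
      ∑ t ∈ Vk lo hi a b m ℓ k, W t := by
    rw [← Finset.sum_filter_of_ne (f := f₃)
      (p := fun t => t ∈ Vk lo hi a b m ℓ k) (fun t _ hne => by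
        by_contra hmem
        exact hne (by rw [hf₃]; exact if_neg hmem))]
    have hsub : (Vk lo hi a b m ℓ (k+1) ⊼ (Vk lo hi a b m ℓ (k-1)).image (· + 1)).filter
        (fun t => t ∈ Vk lo hi a b m ℓ k) ⊆ Vk lo hi a b m ℓ k := by
      intro t ht
      exact (Finset.mem_filter.mp ht).2
    calc _ ≤ ∑ t ∈ Vk lo hi a b m ℓ k, f₃ t :=
          Finset.sum_le_sum_of_subset_of_nonneg hsub (fun t _ _ => h₃ t)
      _ = ∑ t ∈ Vk lo hi a b m ℓ k, W t :=
          Finset.sum_congr rfl fun t ht => by rw [hf₃]; exact if_pos ht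
  have hb4 : ∑ t ∈ Vk lo hi a b m ℓ (k+1) ⊻ (Vk lo hi a b m ℓ (k-1)).image (· + 1), f₄ t ≤
      ∑ t ∈ Vk lo hi a b m ℓ k, W t := by
    rw [← Finset.sum_filter_of_ne (f := f₄)
      (p := fun t => t - 1 ∈ Vk lo hi a b m ℓ k) (fun t _ hne => by
        by_contra hmem
        exact hne (by rw [hf₄]; exact if_neg hmem))]
    have hsub : (Vk lo hi a b m ℓ (k+1) ⊻ (Vk lo hi a b m ℓ (k-1)).image (· + 1)).filter
        (fun t => t - 1 ∈ Vk lo hi a b m ℓ k) ⊆ (Vk lo hi a b m ℓ k).image (· + 1) := by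
      intro t ht
      have h5 := (Finset.mem_filter.mp ht).2
      rw [Finset.mem_image]
      exact ⟨t - 1, h5, by ring⟩
    calc _ ≤ ∑ t ∈ (Vk lo hi a b m ℓ k).image (· + 1), f₄ t :=
          Finset.sum_le_sum_of_subset_of_nonneg hsub (fun t _ _ => h₄ t)
      _ = ∑ t ∈ Vk lo hi a b m ℓ k, W t := by
          rw [Finset.sum_image (fun x _ y _ h => by
            have := congrArg (· - (1 : Fin m.toNat → ℤ)) h
            simpa using this)]
          apply Finset.sum_congr rfl
          intro t ht
          rw [hf₄]
          simp only [add_sub_cancel_right]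
          exact if_pos ht
  rw [hs1, hs2] at had
  have hnn3 : 0 ≤ ∑ t ∈ Vk lo hi a b m ℓ (k+1) ⊼ (Vk lo hi a b m ℓ (k-1)).image (· + 1), f₃ t :=
    Finset.sum_nonneg fun t _ => h₃ t
  have hnnS : 0 ≤ ∑ t ∈ Vk lo hi a b m ℓ k, W t :=
    Finset.sum_nonneg fun t _ => hWn t
  calc (∑ t ∈ Vk lo hi a b m ℓ (k+1), W t) * (∑ t ∈ Vk lo hi a b m ℓ (k-1), W t)
      ≤ _ := had
    _ ≤ (∑ t ∈ Vk lo hi a b m ℓ k, W t) ^ 2 := by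
        rw [sq]
        exact mul_le_mul hb3 hb4 (Finset.sum_nonneg fun t _ => h₄ t) hnnS

end AD

end MonoAux

/-- Corollary 4.2: log-concavity for monotone walks (weighted counting form). -/
theorem monotone_log_concave
    (m : ℤ) (hm : 1 ≤ m) (lo hi : ℤ → ℤ)
    (hlohi : ∀ i, 0 ≤ i → i ≤ m → lo i ≤ hi i)
    (hoverlap : ∀ i, 0 ≤ i → i < m → max (lo i) (lo (i + 1)) ≤ min (hi i) (hi (i + 1)))
    (a b ℓ : ℤ) (hℓ1 : 0 < ℓ) (hℓ2 : ℓ < m)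
    (hA : ((0 : ℤ), a) ∈ Region m lo hi) (hB : (m, b) ∈ Region m lo hi)
    (π ω : ℤ → ℝ) (hπ : ∀ i, 0 ≤ π i) (hω : ∀ i, 0 ≤ ω i)
    (k : ℤ) (hk1 : lo ℓ ≤ k - 1) (hk2 : k + 1 ≤ hi ℓ) :
    monoExit π ω (Region m lo hi) a m b ℓ (k + 1) *
        monoExit π ω (Region m lo hi) a m b ℓ (k - 1) ≤
      monoExit π ω (Region m lo hi) a m b ℓ k ^ 2 := by
  rw [MonoAux.monoExit_eq hm hℓ1 hℓ2 π ω, MonoAux.monoExit_eq hm hℓ1 hℓ2 π ω,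
    MonoAux.monoExit_eq hm hℓ1 hℓ2 π ω]
  set P : ℝ := ∏ x ∈ Finset.Ico (0:ℤ) m, π x with hP
  set S1 : ℝ := ∑ t ∈ MonoAux.Vk lo hi a b m ℓ (k+1), MonoAux.Wt ω a b m t with hS1
  set S2 : ℝ := ∑ t ∈ MonoAux.Vk lo hi a b m ℓ (k-1), MonoAux.Wt ω a b m t with hS2
  set S : ℝ := ∑ t ∈ MonoAux.Vk lo hi a b m ℓ k, MonoAux.Wt ω a b m t with hS
  have hPn : 0 ≤ P := Finset.prod_nonneg fun x _ => hπ x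
  have hle : S1 * S2 ≤ S ^ 2 := MonoAux.sum_vk_sq hm hℓ1 hℓ2 ω hω
  calc (P * S1) * (P * S2) = P^2 * (S1 * S2) := by ring
    _ ≤ P^2 * S^2 := by
        apply mul_le_mul_of_nonneg_left hle (by positivity)
    _ = (P * S)^2 := by ring
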